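/- Disk-minus-halfplane separation: In ℝ², let u be a point, H a closed half-plane with u ∈ H whose boundary line is at distance d + c/2 from a point O (with the nearest boundary point being the midpoint between two collinear points w and u with dist(O,w)=d, dist(w,u)=c, w between O and u). If (d + c/2)² + m²/4 − c²/4 > (L+ℓ)², then the set H \ ball(u, m/2) is disjoint from the closed disk of radius L+ℓ centered at O. -/

import Mathlib

theorem stmt11 (O w u : EuclideanSpace ℝ (Fin 2)) (d c m L ℓ : ℝ)
    (hd : d = dist O w) (hdpos : 0 < d) (hcpos : 0 < c) (hm : 0 < m)
    (hu : u = O + ((d + c) / d) • (w - O))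
    (hineq : (d + c / 2) ^ 2 + m ^ 2 / 4 - c ^ 2 / 4 > (L + ℓ) ^ 2) :
    {p : EuclideanSpace ℝ (Fin 2) | dist p u ≤ dist p w ∧ m / 2 ≤ dist p u} ∩
      Metric.closedBall O (L + ℓ) = ∅ := by
  rw [Set.eq_empty_iff_forall_notMem]
  rintro p ⟨⟨h1, h2⟩, h3⟩
  rw [Metric.mem_closedBall] at h3
  set a : ℝ := (d + c) / d with ha
  have had : a * d = d + c := div_mul_cancel₀ _ hdpos.ne'
  have hxu : p - u = (p - O) - a • (w - O) := by rw [hu]; abel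
  have hnv : ‖w - O‖ = d := by rw [hd, dist_comm, dist_eq_norm]
  have e1 : dist p u ^ 2 = ‖p - O‖ ^ 2
      - 2 * a * (inner ℝ (p - O) (w - O) : ℝ) + a ^ 2 * d ^ 2 := by
    rw [dist_eq_norm, hxu, @norm_sub_sq_real, real_inner_smul_right, norm_smul,
      hnv]
    simp [mul_pow]
    ring
  have e2 : dist p w ^ 2 = ‖p - O‖ ^ 2
      - 2 * (inner ℝ (p - O) (w - O) : ℝ) + d ^ 2 := by
    have : p - w = (p - O) - (w - O) := by abel
    rw [dist_eq_norm, this, @norm_sub_sq_real, hnv]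
  have e3 : dist p O ^ 2 = ‖p - O‖ ^ 2 := by rw [dist_eq_norm]
  have s1 : dist p u ^ 2 ≤ dist p w ^ 2 :=
    pow_le_pow_left₀ dist_nonneg h1 2
  have s2 : (m / 2) ^ 2 ≤ dist p u ^ 2 :=
    pow_le_pow_left₀ (by linarith) h2 2
  have s3 : dist p O ^ 2 ≤ (L + ℓ) ^ 2 :=
    pow_le_pow_left₀ dist_nonneg h3 2
  have hapos : 0 < a := div_pos (by linarith) hdpos
  -- from s1: inner ≥ d*(d + c/2)
  have hinner : (inner ℝ (p - O) (w - O) : ℝ) ≥ d * (d + c / 2) := by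
    rw [e1, e2] at s1
    have h2a : 2 * (a - 1) * (inner ℝ (p - O) (w - O) : ℝ) ≥ (a ^ 2 - 1) * d ^ 2 := by
      nlinarith [s1]
    have ham1 : (a - 1) * d = c := by rw [sub_mul, had]; ring
    have hd2 : 2 * (a - 1) * (inner ℝ (p - O) (w - O) : ℝ) * d ≥ (a ^ 2 - 1) * d ^ 2 * d :=
      mul_le_mul_of_nonneg_right h2a hdpos.le
    have key : 2 * c * (inner ℝ (p - O) (w - O) : ℝ) ≥ c * (2 * d + c) * d := by
      have hrw1 : 2 * (a - 1) * (inner ℝ (p - O) (w - O) : ℝ) * d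
          = 2 * c * (inner ℝ (p - O) (w - O) : ℝ) := by
        rw [← ham1]; ring
      have hrw2 : (a ^ 2 - 1) * d ^ 2 * d = c * (2 * d + c) * d := by
        have : (a ^ 2 - 1) * d ^ 2 = ((a - 1) * d) * (a * d + d) := by ring
        rw [this, ham1, had]; ring
      linarith [hd2, hrw1.symm.le, hrw2.le]
    nlinarith [key, hcpos]
  have haI : 2 * a * (inner ℝ (p - O) (w - O) : ℝ) ≥ 2 * (d + c) * (d + c / 2) := by
    have hml := mul_le_mul_of_nonneg_left hinner (by positivity : (0:ℝ) ≤ 2 * a)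
    have hrw : 2 * a * (d * (d + c / 2)) = 2 * (d + c) * (d + c / 2) := by
      have : 2 * a * (d * (d + c / 2)) = (a * d) * (2 * (d + c / 2)) := by ring
      rw [this, had]; ring
    linarith [hml, hrw.le]
  have ha2 : a ^ 2 * d ^ 2 = (d + c) ^ 2 := by
    have : a ^ 2 * d ^ 2 = (a * d) ^ 2 := by ring
    rw [this, had]
  linarith [s2, s3, e1.le, e1.ge, e3.le, e3.ge, haI, ha2.le, ha2.ge, hineq]
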